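/- Let R = k[x,y,z]/(x²-y², y²-z²) with char k ≠ 2 and let t = (t₀,t₁) with t₀,t₁ ≠ 0. Let N_t = coker(Φ_t⁺). Then dim_k Hom_{grR}(N_t, k) = 2 and dim_k Hom_{grR}(N_t, L_i) ≥ 1 for each i = 1,2,3,4, where L_i are the point modules; a nonzero element of Hom_{grR}(N_t, L₁) is induced by the chain map (A,B) with A = [[0,1],[-t₀,0]], B = [0,1] from the presentation Φ_t⁺ to the presentation [x-y, y-z] of L₁ = R/(x-y, y-z). -/

import Mathlib

open MvPolynomial

noncomputable section

variable (k : Type) [Field k]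

def fourPtsIdeal : Ideal (MvPolynomial (Fin 3) k) :=
  Ideal.span {(X 0 : MvPolynomial (Fin 3) k) ^ 2 - X 1 ^ 2,
              (X 1 : MvPolynomial (Fin 3) k) ^ 2 - X 2 ^ 2}

/-- `R = k[x,y,z]/(x² - y², y² - z²)`. -/
def Rring := MvPolynomial (Fin 3) k ⧸ fourPtsIdeal k

instance : CommRing (Rring k) := Ideal.Quotient.commRing _
instance : Algebra k (Rring k) := Ideal.Quotient.algebra k

/-- `Φ_t⁺ = [[t₁(x+y), y+z], [t₀(z-y), x-y]]` over `R`. -/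
def PhiPlusR (t₀ t₁ : k) : Matrix (Fin 2) (Fin 2) (Rring k) :=
  (!![C t₁ * (X 0 + X 1), X 1 + X 2;
      C t₀ * (X 2 - X 1), X 0 - X 1]).map (Ideal.Quotient.mk (fourPtsIdeal k))

/-- The irrelevant maximal ideal `m = (x, y, z)` of `R` (so `R/m = k`). -/
def irrR : Ideal (Rring k) :=
  Ideal.span {Ideal.Quotient.mk (fourPtsIdeal k) (X 0),
              Ideal.Quotient.mk (fourPtsIdeal k) (X 1),
              Ideal.Quotient.mk (fourPtsIdeal k) (X 2)}

/-- The linear forms `(l₁, l₂, l₃, l₄) = (x-y, y-z, x+y, y+z)` in `R` (cyclic indexing);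
`L_i = R/(l_i, l_{i+1})`. -/
def lform : Fin 4 → Rring k := fun i =>
  Ideal.Quotient.mk (fourPtsIdeal k) (![X 0 - X 1, X 1 - X 2, X 0 + X 1, X 1 + X 2] i)

/-- The ideal `I(p_i) = (l_i, l_{i+1})`, so that `L_i = R/I(p_i)`. -/
def ptIdeal (i : Fin 4) : Ideal (Rring k) := Ideal.span {lform k i, lform k (i + 1)}

/-- A tuple `c : k² ` determines the candidate graded degree-0 morphism
`N_t = coker Φ_t⁺ → R/J` sending the `i`-th degree-0 generator to `c i · 1`; it is a
morphism iff the relations (columns of `Φ_t⁺`) are killed, i.e. iff `c` lies in the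
kernel of this map. -/
def homMap (t₀ t₁ : k) (J : Ideal (Rring k)) :
    (Fin 2 → k) →ₗ[k] (Fin 2 → (Rring k ⧸ J)) where
  toFun c := fun j => ∑ i, c i • (Ideal.Quotient.mk J (PhiPlusR k t₀ t₁ i j))
  map_add' a b := by
    funext j
    simp [add_smul, Finset.sum_add_distrib]
  map_smul' m a := by
    funext j
    simp [Finset.smul_sum, mul_smul]

/-- `Hom_{gr R}(N_t, R/J)`, identified with the space of scalar tuples `c` as above. -/
def homSpace (t₀ t₁ : k) (J : Ideal (Rring k)) : Submodule k (Fin 2 → k) :=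
  LinearMap.ker (homMap k t₀ t₁ J)

lemma aux_algebraMap (c : k) :
    algebraMap k (Rring k) c = Ideal.Quotient.mk (fourPtsIdeal k) (C c) := rfl

lemma aux_mk_mul (p q : MvPolynomial (Fin 3) k) :
    Ideal.Quotient.mk (fourPtsIdeal k) p * Ideal.Quotient.mk (fourPtsIdeal k) q
      = Ideal.Quotient.mk (fourPtsIdeal k) (p * q) := (map_mul _ _ _).symm

lemma aux_mk_add (p q : MvPolynomial (Fin 3) k) :
    Ideal.Quotient.mk (fourPtsIdeal k) p + Ideal.Quotient.mk (fourPtsIdeal k) q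
      = Ideal.Quotient.mk (fourPtsIdeal k) (p + q) :=
  ((Ideal.Quotient.mk _).map_add p q).symm

lemma aux_smul_mk (c : k) (p : MvPolynomial (Fin 3) k) :
    c • (Ideal.Quotient.mk (fourPtsIdeal k) p : Rring k)
      = Ideal.Quotient.mk (fourPtsIdeal k) (C c * p) := by
  erw [Algebra.smul_def (A := Rring k) c, aux_algebraMap]
  exact aux_mk_mul k _ _

lemma aux_smul_mkJ (J : Ideal (Rring k)) (c : k) (x : Rring k) :
    c • (Ideal.Quotient.mk J x : Rring k ⧸ J) = Ideal.Quotient.mk J (c • x) := by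
  rw [← Ideal.Quotient.mkₐ_eq_mk k J, ← map_smul]

lemma aux_mem_span_pair (a b u v x : MvPolynomial (Fin 3) k) (h : u * a + v * b = x) :
    Ideal.Quotient.mk (fourPtsIdeal k) x ∈
      Ideal.span {Ideal.Quotient.mk (fourPtsIdeal k) a,
                  Ideal.Quotient.mk (fourPtsIdeal k) b} := by
  rw [Ideal.mem_span_pair]
  exact ⟨Ideal.Quotient.mk _ u, Ideal.Quotient.mk _ v, by
    rw [aux_mk_mul, aux_mk_mul, aux_mk_add, h]⟩

lemma aux_comb (c0 c1 : k) (p q a b u v : MvPolynomial (Fin 3) k)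
    (h : u * a + v * b = C c0 * p + C c1 * q) :
    c0 • (Ideal.Quotient.mk (fourPtsIdeal k) p : Rring k)
        + c1 • Ideal.Quotient.mk (fourPtsIdeal k) q ∈
      Ideal.span {Ideal.Quotient.mk (fourPtsIdeal k) a,
                  Ideal.Quotient.mk (fourPtsIdeal k) b} := by
  rw [aux_smul_mk, aux_smul_mk, aux_mk_add]
  exact aux_mem_span_pair k a b u v _ h

lemma aux_mem_irr (u v w x : MvPolynomial (Fin 3) k)
    (h : u * X 0 + v * X 1 + w * X 2 = x) :
    Ideal.Quotient.mk (fourPtsIdeal k) x ∈ irrR k := by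
  rw [irrR, ← h, ← aux_mk_add k (u * X 0 + v * X 1) (w * X 2),
    ← aux_mk_add k (u * X 0) (v * X 1), ← aux_mk_mul k u (X 0),
    ← aux_mk_mul k v (X 1), ← aux_mk_mul k w (X 2)]
  refine add_mem (add_mem ?_ ?_) ?_
  · exact Ideal.mul_mem_left _ _ (Ideal.subset_span (Set.mem_insert _ _))
  · exact Ideal.mul_mem_left _ _ (Ideal.subset_span (Set.mem_insert_of_mem _ (Set.mem_insert _ _)))
  · exact Ideal.mul_mem_left _ _
      (Ideal.subset_span (Set.mem_insert_of_mem _ (Set.mem_insert_of_mem _ rfl)))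

lemma aux_mem_homSpace (t₀ t₁ : k) (J : Ideal (Rring k)) (c : Fin 2 → k)
    (h0 : c 0 • PhiPlusR k t₀ t₁ 0 0 + c 1 • PhiPlusR k t₀ t₁ 1 0 ∈ J)
    (h1 : c 0 • PhiPlusR k t₀ t₁ 0 1 + c 1 • PhiPlusR k t₀ t₁ 1 1 ∈ J) :
    c ∈ homSpace k t₀ t₁ J := by
  rw [homSpace, LinearMap.mem_ker]
  funext j
  show ∑ i, c i • (Ideal.Quotient.mk J (PhiPlusR k t₀ t₁ i j)) = 0
  rw [Fin.sum_univ_two, aux_smul_mkJ, aux_smul_mkJ,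
    show (Ideal.Quotient.mk J (c 0 • PhiPlusR k t₀ t₁ 0 j)
        + Ideal.Quotient.mk J (c 1 • PhiPlusR k t₀ t₁ 1 j) : Rring k ⧸ J)
      = Ideal.Quotient.mk J (c 0 • PhiPlusR k t₀ t₁ 0 j + c 1 • PhiPlusR k t₀ t₁ 1 j)
      from ((Ideal.Quotient.mk J).map_add _ _).symm,
    Ideal.Quotient.eq_zero_iff_mem]
  fin_cases j
  exacts [h0, h1]

lemma aux_rank_ge (t₀ t₁ : k) (J : Ideal (Rring k)) (c : Fin 2 → k)
    (hc : c ∈ homSpace k t₀ t₁ J) (hne : c ≠ 0) :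
    1 ≤ Module.finrank k (homSpace k t₀ t₁ J) := by
  have : Nontrivial (homSpace k t₀ t₁ J) :=
    ⟨⟨c, hc⟩, 0, by simpa [Subtype.ext_iff] using hne⟩
  exact Module.finrank_pos


/-- for a smooth member of the pencil (`t₀, t₁ ≠ 0`),
`dim_k Hom_{gr R}(N_t, k) = 2` and `dim_k Hom_{gr R}(N_t, L_i) ≥ 1` for each point
module `L_i`; moreover the chain map `(A, B)` with `A = [[0,1],[-t₀,0]]`, `B = [0,1]`
from the presentation `Φ_t⁺` to the presentation `[x-y, y-z]` of `L₁` satisfies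
`B·Φ_t⁺ = [x-y, y-z]·A` over `R` and induces a nonzero element of
`Hom_{gr R}(N_t, L₁)`, given by the tuple `c = (0, 1)`. -/
theorem stmt_15 (hchar : (2 : k) ≠ 0) (t₀ t₁ : k) (ht₀ : t₀ ≠ 0) (ht₁ : t₁ ≠ 0) :
    Module.finrank k (homSpace k t₀ t₁ (irrR k)) = 2 ∧
    (∀ i : Fin 4, 1 ≤ Module.finrank k (homSpace k t₀ t₁ (ptIdeal k i))) ∧
    (((!![(0 : k), 1]).map (algebraMap k (Rring k)) : Matrix (Fin 1) (Fin 2) (Rring k)) *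
        PhiPlusR k t₀ t₁ =
      ((!![X 0 - X 1, X 1 - X 2]).map (Ideal.Quotient.mk (fourPtsIdeal k)) :
          Matrix (Fin 1) (Fin 2) (Rring k)) *
        ((!![(0 : k), 1; -t₀, 0]).map (algebraMap k (Rring k)) :
          Matrix (Fin 2) (Fin 2) (Rring k))) ∧
    (![0, 1] ∈ homSpace k t₀ t₁ (ptIdeal k 0) ∧ (![0, 1] : Fin 2 → k) ≠ 0) := by
  have e00 : PhiPlusR k t₀ t₁ 0 0
      = Ideal.Quotient.mk (fourPtsIdeal k) (C t₁ * (X 0 + X 1)) := rfl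
  have e01 : PhiPlusR k t₀ t₁ 0 1
      = Ideal.Quotient.mk (fourPtsIdeal k) (X 1 + X 2) := rfl
  have e10 : PhiPlusR k t₀ t₁ 1 0
      = Ideal.Quotient.mk (fourPtsIdeal k) (C t₀ * (X 2 - X 1)) := rfl
  have e11 : PhiPlusR k t₀ t₁ 1 1
      = Ideal.Quotient.mk (fourPtsIdeal k) (X 0 - X 1) := rfl
  -- ptIdeal computations
  have hp0 : ptIdeal k 0 = Ideal.span {Ideal.Quotient.mk (fourPtsIdeal k) (X 0 - X 1),
      Ideal.Quotient.mk (fourPtsIdeal k) (X 1 - X 2)} := rfl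
  have hp1 : ptIdeal k 1 = Ideal.span {Ideal.Quotient.mk (fourPtsIdeal k) (X 1 - X 2),
      Ideal.Quotient.mk (fourPtsIdeal k) (X 0 + X 1)} := rfl
  have hp2 : ptIdeal k 2 = Ideal.span {Ideal.Quotient.mk (fourPtsIdeal k) (X 0 + X 1),
      Ideal.Quotient.mk (fourPtsIdeal k) (X 1 + X 2)} := rfl
  have hp3 : ptIdeal k 3 = Ideal.span {Ideal.Quotient.mk (fourPtsIdeal k) (X 1 + X 2),
      Ideal.Quotient.mk (fourPtsIdeal k) (X 0 - X 1)} := rfl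
  -- membership for i = 0, c = (0,1)
  have hm0 : (![0, 1] : Fin 2 → k) ∈ homSpace k t₀ t₁ (ptIdeal k 0) := by
    refine aux_mem_homSpace k t₀ t₁ _ _ ?_ ?_
    · rw [show (![0,1] : Fin 2 → k) 0 = 0 from rfl, show (![0,1] : Fin 2 → k) 1 = 1 from rfl,
        e00, e10, hp0]
      exact aux_comb k 0 1 _ _ _ _ 0 (-C t₀) (by simp; ring)
    · rw [show (![0,1] : Fin 2 → k) 0 = 0 from rfl, show (![0,1] : Fin 2 → k) 1 = 1 from rfl,
        e01, e11, hp0]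
      exact aux_comb k 0 1 _ _ _ _ 1 0 (by simp)
  refine ⟨?_, ?_, ?_, hm0, ?_⟩
  · -- finrank = 2
    have htop : homSpace k t₀ t₁ (irrR k) = ⊤ := by
      rw [eq_top_iff]
      rintro c -
      refine aux_mem_homSpace k t₀ t₁ _ c ?_ ?_
      · rw [e00, e10]
        erw [aux_smul_mk, aux_smul_mk, aux_mk_add]
        exact aux_mem_irr k (C (c 0) * C t₁) (C (c 0) * C t₁ - C (c 1) * C t₀)
          (C (c 1) * C t₀) _ (by ring)
      · rw [e01, e11]
        erw [aux_smul_mk, aux_smul_mk, aux_mk_add]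
        exact aux_mem_irr k (C (c 1)) (C (c 0) - C (c 1)) (C (c 0)) _ (by ring)
    rw [htop, finrank_top]
    exact Module.finrank_fin_fun k
  · -- finrank ≥ 1 for each point module
    intro i
    fin_cases i
    · exact aux_rank_ge k t₀ t₁ (ptIdeal k 0) ![0, 1] hm0
        (by intro h; simpa using congrFun h 1)
    · refine aux_rank_ge k t₀ t₁ (ptIdeal k 1) ![1, 1] ?_
        (by intro h; simpa using congrFun h 1)
      refine aux_mem_homSpace k t₀ t₁ _ _ ?_ ?_
      · rw [show (![1,1] : Fin 2 → k) 0 = 1 from rfl, show (![1,1] : Fin 2 → k) 1 = 1 from rfl,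
          e00, e10, hp1]
        exact aux_comb k 1 1 _ _ _ _ (-C t₀) (C t₁) (by simp; ring)
      · rw [show (![1,1] : Fin 2 → k) 0 = 1 from rfl, show (![1,1] : Fin 2 → k) 1 = 1 from rfl,
          e01, e11, hp1]
        exact aux_comb k 1 1 _ _ _ _ (-1) 1 (by simp; ring)
    · refine aux_rank_ge k t₀ t₁ (ptIdeal k 2) ![1, 0] ?_
        (by intro h; simpa using congrFun h 0)
      refine aux_mem_homSpace k t₀ t₁ _ _ ?_ ?_
      · rw [show (![1,0] : Fin 2 → k) 0 = 1 from rfl, show (![1,0] : Fin 2 → k) 1 = 0 from rfl,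
          e00, e10, hp2]
        exact aux_comb k 1 0 _ _ _ _ (C t₁) 0 (by simp)
      · rw [show (![1,0] : Fin 2 → k) 0 = 1 from rfl, show (![1,0] : Fin 2 → k) 1 = 0 from rfl,
          e01, e11, hp2]
        exact aux_comb k 1 0 _ _ _ _ 0 1 (by simp)
    · refine aux_rank_ge k t₀ t₁ (ptIdeal k 3) ![t₀, t₁] ?_
        (by intro h; exact ht₀ (by simpa using congrFun h 0))
      refine aux_mem_homSpace k t₀ t₁ _ _ ?_ ?_
      · rw [show (![t₀,t₁] : Fin 2 → k) 0 = t₀ from rfl,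
          show (![t₀,t₁] : Fin 2 → k) 1 = t₁ from rfl, e00, e10, hp3]
        exact aux_comb k t₀ t₁ _ _ _ _ (C t₀ * C t₁) (C t₀ * C t₁) (by ring)
      · rw [show (![t₀,t₁] : Fin 2 → k) 0 = t₀ from rfl,
          show (![t₀,t₁] : Fin 2 → k) 1 = t₁ from rfl, e01, e11, hp3]
        exact aux_comb k t₀ t₁ _ _ _ _ (C t₀) (C t₁) (by ring)
  · -- matrix identity
    ext j i
    fin_cases j
    fin_cases i <;>
    · simp only [Matrix.mul_apply, Fin.sum_univ_two, PhiPlusR, Matrix.map_apply,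
        Fin.mk_zero, Fin.mk_one, Fin.isValue, Matrix.of_apply, Matrix.cons_val',
        Matrix.cons_val_zero, Matrix.cons_val_one, Matrix.head_cons,
        Matrix.empty_val', Matrix.cons_val_fin_one, Matrix.head_fin_const,
        aux_algebraMap, aux_mk_mul, aux_mk_add]
      refine congrArg (Ideal.Quotient.mk (fourPtsIdeal k)) ?_
      simp only [C_0, C_1, map_neg, Matrix.of_apply, Matrix.cons_val', Matrix.cons_val_zero,
        Matrix.cons_val_one, Matrix.head_cons, Matrix.cons_val_fin_one]
      ring
  · intro h; simpa using congrFun h 1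

end
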